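/- Let n, a, s_m be as follows: s_m = -a^(m+1) ∑_{k=1}^n 2^(k-1) binom(m,k-1) binom(n,k). Then the entire function F(t) = (1/(2π)) ∑_{m=0}^∞ s_m (-it)^m / m! equals -(a e^{-iat}/(2π)) · L_{n-1}^{(1)}(2iat) for all t ∈ ℂ, where L_{n-1}^{(1)} is the generalised Laguerre polynomial L_{n-1}^{(1)}(x) = ∑_{k=0}^{n-1} binom(n, k+1) (-x)^k / k!. -/

import Mathlib

open Complex Finset in
lemma aux_choose_hasSum (x : ℂ) (j : ℕ) :
    HasSum (fun m : ℕ => (m.choose j : ℂ) * x ^ m / (Nat.factorial m : ℂ))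
      (x ^ j / (Nat.factorial j : ℂ) * Complex.exp x) := by
  have h1 : HasSum (fun m : ℕ =>
      (((m + j).choose j : ℂ)) * x ^ (m + j) / (Nat.factorial (m + j) : ℂ))
      (x ^ j / (Nat.factorial j : ℂ) * Complex.exp x) := by
    have he : HasSum (fun m : ℕ => x ^ m / (Nat.factorial m : ℂ)) (Complex.exp x) := by
      rw [Complex.exp_eq_exp_ℂ]
      exact NormedSpace.expSeries_div_hasSum_exp x
    have := (he.mul_left (x ^ j / (Nat.factorial j : ℂ)))
    convert this using 2 with m
    · rfl
    have hkey : ((m + j).choose j : ℂ) * (Nat.factorial m : ℂ) * (Nat.factorial j : ℂ)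
        = (Nat.factorial (m + j) : ℂ) := by
      exact_mod_cast congrArg (Nat.cast : ℕ → ℂ)
        (Nat.add_choose_mul_factorial_mul_factorial m j)
    have hm : (Nat.factorial m : ℂ) ≠ 0 := Nat.cast_ne_zero.mpr (Nat.factorial_ne_zero m)
    have hj : (Nat.factorial j : ℂ) ≠ 0 := Nat.cast_ne_zero.mpr (Nat.factorial_ne_zero j)
    have hmj : (Nat.factorial (m + j) : ℂ) ≠ 0 :=
      Nat.cast_ne_zero.mpr (Nat.factorial_ne_zero _)
    field_simp [pow_add]
    rw [← hkey]
    ring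
  rw [hasSum_nat_add_iff (f := fun m : ℕ => (m.choose j : ℂ) * x ^ m / (Nat.factorial m : ℂ)) j] at h1
  have hz : (∑ i ∈ Finset.range j, (i.choose j : ℂ) * x ^ i / (Nat.factorial i : ℂ)) = 0 := by
    apply Finset.sum_eq_zero
    intro i hi
    rw [Nat.choose_eq_zero_of_lt (Finset.mem_range.mp hi)]
    simp
  rwa [hz, add_zero] at h1

open Complex in
theorem inverse_fourier_transform_of_weight (n : ℕ) (hn : 0 < n) (a : ℂ) (ha : a ≠ 0)
    (s : ℕ → ℂ)
    (hs : ∀ m : ℕ, s m = -a ^ (m + 1) *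
      ∑ k ∈ Finset.Icc 1 n, (2 : ℂ) ^ (k - 1) * (m.choose (k - 1) : ℂ) * (n.choose k : ℂ)) :
    ∀ t : ℂ,
      Summable (fun m : ℕ => s m * (-I * t) ^ m / (Nat.factorial m : ℂ)) ∧
      (1 / (2 * (Real.pi : ℂ))) * ∑' m : ℕ, s m * (-I * t) ^ m / (Nat.factorial m : ℂ) =
        -(a * Complex.exp (-I * a * t) / (2 * (Real.pi : ℂ))) *
          ∑ k ∈ Finset.range n,
            (n.choose (k + 1) : ℂ) * (-(2 * I * a * t)) ^ k / (Nat.factorial k : ℂ) := by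
  intro t
  set x : ℂ := -I * a * t with hx
  set c : ℕ → ℂ := fun j => -a * 2 ^ j * (n.choose (j + 1) : ℂ) with hc
  have hfun : ∀ m : ℕ, s m * (-I * t) ^ m / (Nat.factorial m : ℂ)
      = ∑ j ∈ Finset.range n, c j * ((m.choose j : ℂ) * x ^ m / (Nat.factorial m : ℂ)) := by
    intro m
    rw [hs m]
    have hIcc : (∑ k ∈ Finset.Icc 1 n,
        (2 : ℂ) ^ (k - 1) * (m.choose (k - 1) : ℂ) * (n.choose k : ℂ))
        = ∑ j ∈ Finset.range n, (2 : ℂ) ^ j * (m.choose j : ℂ) * (n.choose (j + 1) : ℂ) := by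
      rw [show Finset.Icc 1 n = Finset.map ⟨fun j => j + 1, add_left_injective 1⟩
        (Finset.range n) from ?_]
      · rw [Finset.sum_map]
        simp
      · ext k
        simp only [Finset.mem_Icc, Finset.mem_map, Finset.mem_range,
          Function.Embedding.coeFn_mk]
        constructor
        · rintro ⟨h1, h2⟩; exact ⟨k - 1, by omega, by show k - 1 + 1 = k; omega⟩
        · rintro ⟨j, hj, rfl⟩
          refine ⟨by omega, by omega⟩
    rw [hIcc, Finset.mul_sum, Finset.sum_mul, Finset.sum_div]
    apply Finset.sum_congr rfl
    intro j _
    have hp : x ^ m = a ^ m * (-I * t) ^ m := by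
      rw [hx, show -I * a * t = a * (-I * t) by ring, mul_pow]
    rw [hp, hc]
    simp only [pow_succ]
    ring
  have hsum : HasSum (fun m : ℕ => s m * (-I * t) ^ m / (Nat.factorial m : ℂ))
      (∑ j ∈ Finset.range n, c j * (x ^ j / (Nat.factorial j : ℂ) * Complex.exp x)) := by
    have : HasSum (fun m : ℕ => ∑ j ∈ Finset.range n,
        c j * ((m.choose j : ℂ) * x ^ m / (Nat.factorial m : ℂ)))
        (∑ j ∈ Finset.range n, c j * (x ^ j / (Nat.factorial j : ℂ) * Complex.exp x)) :=
      hasSum_sum fun j _ => (aux_choose_hasSum x j).mul_left (c j)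
    have heq : (fun m : ℕ => s m * (-I * t) ^ m / (Nat.factorial m : ℂ))
        = fun m : ℕ => ∑ j ∈ Finset.range n,
            c j * ((m.choose j : ℂ) * x ^ m / (Nat.factorial m : ℂ)) := funext hfun
    rw [heq]; exact this
  refine ⟨hsum.summable, ?_⟩
  rw [hsum.tsum_eq, Finset.mul_sum, Finset.mul_sum]
  apply Finset.sum_congr rfl
  intro j _
  have h2 : (-(2 * I * a * t)) ^ j = 2 ^ j * x ^ j := by
    rw [hx, show -(2 * I * a * t) = 2 * (-I * a * t) by ring, mul_pow]
  rw [h2, hc, hx]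
  ring
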